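/- For every rational number t with t ≠ 0, t ≠ 1 and t ≠ -1, the point R = (-t² + 1, t⁴ - 1) is a rational point on the elliptic curve Y² = (X + 2t²)(X² + t⁶ - 2t⁴ + t²), and R has infinite order in the group of rational points of this curve. -/

import Mathlib

open WeierstrassCurve.Affine

/-- The elliptic curve `Y² = (X + 2t²)(X² + t⁶ - 2t⁴ + t²)` as a Weierstrass curve:
expanding gives `Y² = X³ + 2t²X² + (t⁶ - 2t⁴ + t²)X + 2t²(t⁶ - 2t⁴ + t²)`. -/
noncomputable def curveT (t : ℚ) : WeierstrassCurve.Affine ℚ :=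
  { a₁ := 0, a₂ := 2 * t ^ 2, a₃ := 0,
    a₄ := t ^ 6 - 2 * t ^ 4 + t ^ 2,
    a₆ := 2 * t ^ 2 * (t ^ 6 - 2 * t ^ 4 + t ^ 2) }

local notation "V" => padicValRat 2

section Helpers

lemma vadd {a s : ℚ} (ha : a ≠ 0) (h : s = 0 ∨ V a < V s) :
    V (a + s) = V a ∧ a + s ≠ 0 := by
  by_cases hs : s = 0
  · simp [hs, ha]
  · have h' : V a < V s := by tauto
    have hne : a + s ≠ 0 := by
      intro h0
      have : s = -a := by linarith
      rw [this, padicValRat.neg] at h'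
      exact lt_irrefl _ h'
    exact ⟨padicValRat.add_eq_of_lt hne ha hs h', hne⟩

lemma vge {a b : ℚ} {M : ℤ} (ha : a = 0 ∨ M < V a) (hb : b = 0 ∨ M < V b) :
    a + b = 0 ∨ M < V (a + b) := by
  by_cases h0 : a + b = 0
  · exact Or.inl h0
  right
  rcases ha with rfl | ha
  · rcases hb with rfl | hb
    · simp at h0
    · simpa using hb
  rcases hb with rfl | hb
  · simpa using ha
  exact lt_of_lt_of_le (lt_min ha hb) (padicValRat.min_le_padicValRat_add h0)

lemma v_two : V (2 : ℚ) = 1 := padicValRat.self one_lt_two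

lemma v_odd_int {z : ℤ} (hz : Odd z) : V (z : ℚ) = 0 := by
  rw [padicValRat.of_int, padicValInt.eq_zero_of_not_dvd]
  · simp
  · rcases hz with ⟨k, rfl⟩
    intro ⟨c, hc⟩
    omega

lemma v_three : V (3 : ℚ) = 0 := by
  have h3 : ((3:ℤ):ℚ) = (3:ℚ) := by norm_num
  rw [← h3, v_odd_int ⟨1, by ring⟩]

lemma v_four : V (4 : ℚ) = 2 := by
  rw [show (4:ℚ) = 2 ^ 2 by norm_num, padicValRat.pow (2:ℚ), v_two]
  norm_num

lemma v_int_nonneg (z : ℤ) : 0 ≤ V (z : ℚ) := by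
  rw [padicValRat.of_int]
  exact Int.natCast_nonneg _

lemma not_fin_of_pow_two_smul_inj {G : Type*} [AddCommGroup G] {Q : G}
    (hinj : ∀ k l : ℕ, (2 ^ k) • Q = (2 ^ l) • Q → k = l) : ¬ IsOfFinAddOrder Q := by
  intro hfin
  obtain ⟨n, hn, hnQ⟩ := isOfFinAddOrder_iff_nsmul_eq_zero.mp hfin
  haveI : NeZero n := ⟨hn.ne'⟩
  obtain ⟨k, l, hkl, hmap⟩ :=
    Finite.exists_ne_map_eq_of_infinite (fun k : ℕ => ((2 ^ k : ℕ) : ZMod n))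
  have key : ∀ k l : ℕ, k < l → ((2 ^ k : ℕ) : ZMod n) = ((2 ^ l : ℕ) : ZMod n) → False := by
    intro k l hlt heq
    have hmod := (ZMod.natCast_eq_natCast_iff _ _ _).mp heq
    have hle : (2 : ℕ) ^ k ≤ 2 ^ l := Nat.pow_le_pow_right (by norm_num) hlt.le
    obtain ⟨c, hc⟩ := (Nat.modEq_iff_dvd' hle).mp hmod
    have h2l : (2 : ℕ) ^ l = 2 ^ k + n * c := by omega
    have : (2 ^ l) • Q = (2 ^ k) • Q := by
      rw [h2l, add_smul, mul_comm, mul_smul, hnQ, smul_zero, add_zero]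
    exact absurd (hinj _ _ this) hlt.ne'
  rcases hkl.lt_or_gt with h | h
  · exact key _ _ h hmap
  · exact key _ _ h hmap.symm

lemma some_congr {W : WeierstrassCurve.Affine ℚ} {x x' y y' : ℚ} (hx : x = x') (hy : y = y')
    (h : W.Nonsingular x y) :
    ∃ h' : W.Nonsingular x' y', WeierstrassCurve.Affine.Point.some _ _ h
      = WeierstrassCurve.Affine.Point.some _ _ h' := by
  subst hx; subst hy; exact ⟨h, rfl⟩

lemma v_rat_cases (t : ℚ) (ht0 : t ≠ 0) :
    0 < V t ∨ V t < 0 ∨ (Odd t.num ∧ Odd (t.den : ℤ)) := by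
  have hnum : t.num ≠ 0 := Rat.num_ne_zero.mpr ht0
  have hnum0 : (t.num : ℚ) ≠ 0 := Int.cast_ne_zero.mpr hnum
  have hdenN : t.den ≠ 0 := t.den_nz
  have hden0 : ((t.den : ℤ) : ℚ) ≠ 0 := by
    exact_mod_cast Int.natCast_ne_zero.mpr hdenN
  have hVt : V t = V (t.num : ℚ) - V ((t.den : ℤ) : ℚ) := by
    have hdd := padicValRat.div (p := 2) hnum0 hden0
    have ht : (t.num : ℚ) / ((t.den : ℤ) : ℚ) = t := by
      push_cast
      exact Rat.num_div_den t
    rw [ht] at hdd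
    exact hdd
  rcases Int.even_or_odd t.num with he | ho
  · -- numerator even, denominator odd
    have hdenodd : Odd (t.den : ℤ) := by
      rcases Nat.even_or_odd t.den with hde | hdo
      · exfalso
        have hcop : Nat.gcd t.num.natAbs t.den = 1 := t.reduced
        have h2n : 2 ∣ t.num.natAbs := by
          have : Even t.num.natAbs := Int.natAbs_even.mpr he
          exact this.two_dvd
        have h2d : 2 ∣ t.den := hde.two_dvd
        have := Nat.dvd_gcd h2n h2d
        rw [hcop] at this
        omega
      · exact_mod_cast hdo
    left
    obtain ⟨c, hc⟩ := he
    have hc0 : (c : ℚ) ≠ 0 := by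
      intro h
      apply hnum0
      rw [show ((t.num : ℤ) : ℚ) = (c : ℚ) + (c : ℚ) by exact_mod_cast congrArg Int.cast hc, h]
      ring
    have hv : V (t.num : ℚ) = 1 + V (c : ℚ) := by
      rw [show ((t.num : ℤ) : ℚ) = 2 * (c : ℚ) by
        push_cast [hc]; ring, padicValRat.mul two_ne_zero hc0, v_two]
    have hcge := v_int_nonneg c
    have hden := v_odd_int hdenodd
    rw [hVt, hv, hden]
    linarith
  · rcases Nat.even_or_odd t.den with hde | hdo
    · right; left
      obtain ⟨d, hd⟩ := hde
      have hd0 : (d : ℚ) ≠ 0 := by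
        intro h
        have : d = 0 := by exact_mod_cast h
        omega
      have hv : V ((t.den : ℤ) : ℚ) = 1 + V (d : ℚ) := by
        rw [show ((t.den : ℤ) : ℚ) = 2 * (d : ℚ) by push_cast [hd]; ring,
          padicValRat.mul two_ne_zero hd0, v_two]
      have hdge := v_int_nonneg (d : ℤ)
      have hdge' : (0 : ℤ) ≤ V (d : ℚ) := by
        have : ((d : ℤ) : ℚ) = (d : ℚ) := by push_cast; ring
        rwa [this] at hdge
      rw [hVt, v_odd_int ho, hv]
      linarith
    · exact Or.inr (Or.inr ⟨ho, by exact_mod_cast hdo⟩)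

end Helpers

section Curve

lemma curveT_negY (t x y : ℚ) : (curveT t).negY x y = -y := by
  simp [curveT, WeierstrassCurve.Affine.negY]

lemma double_val (t : ℚ) {x y : ℚ} (h : (curveT t).Nonsingular x y)
    (hy0 : y ≠ 0) (hx0 : x ≠ 0)
    (hn0 : 3 * x ^ 2 + 2 * (2 * t ^ 2) * x + (t ^ 6 - 2 * t ^ 4 + t ^ 2) ≠ 0)
    (hlt2 : 2 * V (3 * x ^ 2 + 2 * (2 * t ^ 2) * x + (t ^ 6 - 2 * t ^ 4 + t ^ 2))
        - 2 - 2 * V y < V (2 * t ^ 2))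
    (hlt3 : 2 * V (3 * x ^ 2 + 2 * (2 * t ^ 2) * x + (t ^ 6 - 2 * t ^ 4 + t ^ 2))
        - 2 - 2 * V y < 1 + V x) :
    ∃ (x' y' : ℚ) (h' : (curveT t).Nonsingular x' y'),
      WeierstrassCurve.Affine.Point.some _ _ h + WeierstrassCurve.Affine.Point.some _ _ h
        = WeierstrassCurve.Affine.Point.some _ _ h' ∧
      V x' = 2 * V (3 * x ^ 2 + 2 * (2 * t ^ 2) * x + (t ^ 6 - 2 * t ^ 4 + t ^ 2))
        - 2 - 2 * V y ∧ x' ≠ 0 := by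
  set n : ℚ := 3 * x ^ 2 + 2 * (2 * t ^ 2) * x + (t ^ 6 - 2 * t ^ 4 + t ^ 2) with hn
  have hyne : y ≠ (curveT t).negY x y := by
    rw [curveT_negY]; intro hc; apply hy0; linarith
  have hL : (curveT t).slope x x y y = n / (2 * y) := by
    rw [WeierstrassCurve.Affine.slope_of_Y_ne rfl hyne, curveT_negY]
    simp only [curveT]
    rw [hn]; ring
  have h2y : (2 : ℚ) * y ≠ 0 := mul_ne_zero two_ne_zero hy0
  set L : ℚ := (curveT t).slope x x y y with hLdef
  have hL0 : L ≠ 0 := by rw [hL]; exact div_ne_zero hn0 h2y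
  have hVL : V L = V n - (1 + V y) := by
    rw [hL, padicValRat.div hn0 h2y, padicValRat.mul two_ne_zero hy0, v_two]
  have hVL2 : V (L ^ 2) = 2 * V n - 2 - 2 * V y := by
    rw [padicValRat.pow L, hVL]; ring
  have haddX : (curveT t).addX x x L = L ^ 2 + (-(2 * t ^ 2) + -(2 * x)) := by
    simp only [WeierstrassCurve.Affine.addX, curveT]
    ring
  have hL20 : L ^ 2 ≠ 0 := pow_ne_zero _ hL0
  have hs : (-(2 * t ^ 2) + -(2 * x)) = 0 ∨ V (L ^ 2) < V (-(2 * t ^ 2) + -(2 * x)) := by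
    by_cases hss : (-(2 * t ^ 2) + -(2 * x)) = 0
    · exact Or.inl hss
    right
    rw [hVL2]
    refine lt_of_lt_of_le (lt_min ?_ ?_) (padicValRat.min_le_padicValRat_add hss)
    · rwa [padicValRat.neg]
    · rw [padicValRat.neg, padicValRat.mul two_ne_zero hx0, v_two]
      exact hlt3
  have hxval := vadd hL20 hs
  refine ⟨(curveT t).addX x x L, (curveT t).addY x x y L,
    WeierstrassCurve.Affine.nonsingular_add h h fun hxy => hyne hxy.right,
    WeierstrassCurve.Affine.Point.add_self_of_Y_ne hyne, ?_, ?_⟩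
  · rw [haddX, hxval.1, hVL2]
  · rw [haddX]; exact hxval.2

lemma step (t : ℚ) (ht0 : t ≠ 0) (ht1 : t ^ 2 ≠ 1) {x y : ℚ}
    (h : (curveT t).Nonsingular x y)
    (he0 : V x < 0) (he2 : V x < V (2 * t ^ 2))
    (he4 : 2 * V x < V (t ^ 6 - 2 * t ^ 4 + t ^ 2))
    (he6 : 3 * V x < V (2 * t ^ 2 * (t ^ 6 - 2 * t ^ 4 + t ^ 2))) :
    ∃ (x' y' : ℚ) (h' : (curveT t).Nonsingular x' y'),
      WeierstrassCurve.Affine.Point.some _ _ h + WeierstrassCurve.Affine.Point.some _ _ h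
        = WeierstrassCurve.Affine.Point.some _ _ h' ∧ V x' = V x - 2 := by
  have hx0 : x ≠ 0 := by intro hc; rw [hc, padicValRat.zero] at he0; omega
  have ha2 : (2 : ℚ) * t ^ 2 ≠ 0 := by positivity
  have ha4 : t ^ 6 - 2 * t ^ 4 + t ^ 2 ≠ 0 := by
    have hf : t ^ 6 - 2 * t ^ 4 + t ^ 2 = t ^ 2 * (t ^ 2 - 1) ^ 2 := by ring
    rw [hf]
    exact mul_ne_zero (pow_ne_zero 2 ht0) (pow_ne_zero 2 (sub_ne_zero.mpr ht1))
  have ha6 : 2 * t ^ 2 * (t ^ 6 - 2 * t ^ 4 + t ^ 2) ≠ 0 := mul_ne_zero ha2 ha4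
  have heq : y ^ 2 = x ^ 3 + (2 * t ^ 2 * x ^ 2 + ((t ^ 6 - 2 * t ^ 4 + t ^ 2) * x
      + 2 * t ^ 2 * (t ^ 6 - 2 * t ^ 4 + t ^ 2))) := by
    have hh := ((curveT t).equation_iff x y).mp h.1
    simp only [curveT] at hh
    linear_combination hh
  have hx3 : V (x ^ 3) = 3 * V x := padicValRat.pow x
  have hx30 : x ^ 3 ≠ 0 := pow_ne_zero _ hx0
  have hT1 : 3 * V x < V (2 * t ^ 2 * x ^ 2) := by
    rw [padicValRat.mul ha2 (pow_ne_zero _ hx0), padicValRat.pow x]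
    push_cast
    linarith
  have hT2 : 3 * V x < V ((t ^ 6 - 2 * t ^ 4 + t ^ 2) * x) := by
    rw [padicValRat.mul ha4 hx0]
    linarith
  have hsum := vge (M := 3 * V x) (Or.inr hT1) (vge (Or.inr hT2) (Or.inr he6))
  have hor : (2 * t ^ 2 * x ^ 2 + ((t ^ 6 - 2 * t ^ 4 + t ^ 2) * x
      + 2 * t ^ 2 * (t ^ 6 - 2 * t ^ 4 + t ^ 2))) = 0 ∨
      V (x ^ 3) < V (2 * t ^ 2 * x ^ 2 + ((t ^ 6 - 2 * t ^ 4 + t ^ 2) * x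
      + 2 * t ^ 2 * (t ^ 6 - 2 * t ^ 4 + t ^ 2))) := by rw [hx3]; exact hsum
  have hy2 := vadd hx30 hor
  rw [← heq] at hy2
  have hy0 : y ≠ 0 := by
    intro hc; rw [hc] at hy2; simp at hy2
  have hVy : 2 * V y = 3 * V x := by
    have hpw := padicValRat.pow (p := 2) y (k := 2)
    rw [hy2.1, hx3] at hpw
    push_cast at hpw
    linarith
  have h3x2 : (3 : ℚ) * x ^ 2 ≠ 0 := by positivity
  have hV3x2 : V (3 * x ^ 2) = 2 * V x := by
    rw [padicValRat.mul (by norm_num) (pow_ne_zero _ hx0), v_three, padicValRat.pow x]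
    ring
  have hN1 : 2 * V x < V (2 * (2 * t ^ 2) * x) := by
    have h22 : (2 : ℚ) * (2 * t ^ 2) ≠ 0 := by positivity
    rw [padicValRat.mul h22 hx0, padicValRat.mul two_ne_zero ha2, v_two]
    linarith
  have hnsum := vge (M := 2 * V x) (Or.inr hN1) (Or.inr he4)
  have hnor : (2 * (2 * t ^ 2) * x + (t ^ 6 - 2 * t ^ 4 + t ^ 2)) = 0 ∨
      V (3 * x ^ 2) < V (2 * (2 * t ^ 2) * x + (t ^ 6 - 2 * t ^ 4 + t ^ 2)) := by
    rw [hV3x2]; exact hnsum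
  have hnval := vadd h3x2 hnor
  have hadd : 3 * x ^ 2 + (2 * (2 * t ^ 2) * x + (t ^ 6 - 2 * t ^ 4 + t ^ 2))
      = 3 * x ^ 2 + 2 * (2 * t ^ 2) * x + (t ^ 6 - 2 * t ^ 4 + t ^ 2) := by ring
  rw [hadd] at hnval
  obtain ⟨x', y', h', hsum', hval', _⟩ := double_val t h hy0 hx0 hnval.2
    (by rw [hnval.1]; linarith) (by rw [hnval.1]; linarith)
  exact ⟨x', y', h', hsum', by rw [hval', hnval.1]; linarith⟩

lemma iter (t : ℚ) (ht0 : t ≠ 0) (ht1 : t ^ 2 ≠ 1) {x y : ℚ}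
    (h : (curveT t).Nonsingular x y)
    (he0 : V x < 0) (he2 : V x < V (2 * t ^ 2))
    (he4 : 2 * V x < V (t ^ 6 - 2 * t ^ 4 + t ^ 2))
    (he6 : 3 * V x < V (2 * t ^ 2 * (t ^ 6 - 2 * t ^ 4 + t ^ 2))) :
    ∀ k : ℕ, ∃ (x' y' : ℚ) (h' : (curveT t).Nonsingular x' y'),
      (2 ^ k) • (WeierstrassCurve.Affine.Point.some _ _ h)
        = WeierstrassCurve.Affine.Point.some _ _ h' ∧ V x' = V x - 2 * k := by
  intro k
  induction k with
  | zero => exact ⟨x, y, h, by rw [pow_zero, one_smul], by push_cast; ring⟩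
  | succ k ih =>
    obtain ⟨xk, yk, hk, hks, hkv⟩ := ih
    have hknn : (0 : ℤ) ≤ (k : ℤ) := Int.natCast_nonneg k
    obtain ⟨x', y', h', hsum, hv⟩ := step t ht0 ht1 hk
      (by rw [hkv]; linarith) (by rw [hkv]; linarith)
      (by rw [hkv]; linarith) (by rw [hkv]; linarith)
    refine ⟨x', y', h', ?_, ?_⟩
    · calc (2 ^ (k + 1)) • (WeierstrassCurve.Affine.Point.some _ _ h)
          = (2 * 2 ^ k) • (WeierstrassCurve.Affine.Point.some _ _ h) := by rw [pow_succ, mul_comm]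
        _ = 2 • ((2 ^ k) • (WeierstrassCurve.Affine.Point.some _ _ h)) := mul_smul _ _ _
        _ = WeierstrassCurve.Affine.Point.some _ _ h' := by rw [hks, two_smul, hsum]
    · rw [hv, hkv]; push_cast; ring

lemma final (t : ℚ) (ht0 : t ≠ 0) (ht1 : t ^ 2 ≠ 1) {x y : ℚ}
    (hQ : (curveT t).Nonsingular x y)
    (he0 : V x < 0) (he2 : V x < V (2 * t ^ 2))
    (he4 : 2 * V x < V (t ^ 6 - 2 * t ^ 4 + t ^ 2))
    (he6 : 3 * V x < V (2 * t ^ 2 * (t ^ 6 - 2 * t ^ 4 + t ^ 2))) :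
    ¬ IsOfFinAddOrder (WeierstrassCurve.Affine.Point.some _ _ hQ) := by
  apply not_fin_of_pow_two_smul_inj
  intro k l hkl
  obtain ⟨xk, yk, hk, hks, hkv⟩ := iter t ht0 ht1 hQ he0 he2 he4 he6 k
  obtain ⟨xl, yl, hl, hls, hlv⟩ := iter t ht0 ht1 hQ he0 he2 he4 he6 l
  rw [hks, hls] at hkl
  have hx : xk = xl := by injection hkl
  have hv : V x - 2 * (k : ℤ) = V x - 2 * (l : ℤ) := by rw [← hkv, ← hlv, hx]
  have : (k : ℤ) = l := by linarith
  exact_mod_cast this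

end Curve

theorem point_R_on_curveT_infinite_order (t : ℚ) (h0 : t ≠ 0) (h1 : t ≠ 1) (h2 : t ≠ -1) :
    ∃ h : (curveT t).Nonsingular (-t ^ 2 + 1) (t ^ 4 - 1),
      ¬ IsOfFinAddOrder (WeierstrassCurve.Affine.Point.some _ _ h) := by
  have ht1 : t ^ 2 ≠ 1 := by
    intro hc
    have : (t - 1) * (t + 1) = 0 := by linear_combination hc
    rcases mul_eq_zero.mp this with h | h
    · exact h1 (by linarith)
    · exact h2 (by linarith)
  have ht21 : t ^ 2 - 1 ≠ 0 := sub_ne_zero.mpr ht1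
  have ht2p : t ^ 2 + 1 ≠ 0 := by positivity
  have hΔval : (curveT t).Δ = -64 * t ^ 6 * (t ^ 2 - 1) ^ 2 * (t ^ 2 + 1) ^ 4 := by
    simp only [curveT, WeierstrassCurve.Δ, WeierstrassCurve.b₂, WeierstrassCurve.b₄,
      WeierstrassCurve.b₆, WeierstrassCurve.b₈]
    ring
  have hΔ : (curveT t).Δ ≠ 0 := by
    rw [hΔval]
    exact mul_ne_zero (mul_ne_zero (mul_ne_zero (by norm_num) (pow_ne_zero _ h0))
      (pow_ne_zero _ ht21)) (pow_ne_zero _ ht2p)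
  have hPeq : (curveT t).Equation (-t ^ 2 + 1) (t ^ 4 - 1) := by
    rw [WeierstrassCurve.Affine.equation_iff]
    simp only [curveT]
    ring
  have hP := ((curveT t).equation_iff_nonsingular_of_Δ_ne_zero hΔ).mp hPeq
  refine ⟨hP, fun hfin => ?_⟩
  -- explicit doubling of P
  have hty : t ^ 4 - 1 ≠ 0 := by
    have hf : t ^ 4 - 1 = (t ^ 2 - 1) * (t ^ 2 + 1) := by ring
    rw [hf]; exact mul_ne_zero ht21 ht2p
  have hyne : t ^ 4 - 1 ≠ (curveT t).negY (-t ^ 2 + 1) (t ^ 4 - 1) := by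
    rw [curveT_negY]; intro hc; apply hty; linarith
  have hL : (curveT t).slope (-t ^ 2 + 1) (-t ^ 2 + 1) (t ^ 4 - 1) (t ^ 4 - 1)
      = (t ^ 2 - 3) / 2 := by
    rw [WeierstrassCurve.Affine.slope_of_Y_ne rfl hyne, curveT_negY]
    simp only [curveT]
    rw [div_eq_div_iff (by intro hc; apply hty; linarith) two_ne_zero]
    ring
  have e1 : (curveT t).addX (-t ^ 2 + 1) (-t ^ 2 + 1)
      ((curveT t).slope (-t ^ 2 + 1) (-t ^ 2 + 1) (t ^ 4 - 1) (t ^ 4 - 1))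
      = (t ^ 4 - 6 * t ^ 2 + 1) / 4 := by
    rw [hL]; simp only [WeierstrassCurve.Affine.addX, curveT]; ring
  have e2 : (curveT t).addY (-t ^ 2 + 1) (-t ^ 2 + 1) (t ^ 4 - 1)
      ((curveT t).slope (-t ^ 2 + 1) (-t ^ 2 + 1) (t ^ 4 - 1) (t ^ 4 - 1))
      = (-((t ^ 2 + 1) ^ 3)) / 8 := by
    rw [WeierstrassCurve.Affine.addY, WeierstrassCurve.Affine.negAddY, hL]
    simp only [WeierstrassCurve.Affine.addX, curveT, WeierstrassCurve.Affine.negY]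
    ring
  obtain ⟨h₂, hcg⟩ := some_congr e1 e2
    (WeierstrassCurve.Affine.nonsingular_add hP hP fun hxy => hyne hxy.right)
  have h2sum : WeierstrassCurve.Affine.Point.some _ _ hP + WeierstrassCurve.Affine.Point.some _ _ hP
      = WeierstrassCurve.Affine.Point.some _ _ h₂ :=
    (WeierstrassCurve.Affine.Point.add_self_of_Y_ne hyne).trans hcg
  have hfin2 : IsOfFinAddOrder (WeierstrassCurve.Affine.Point.some _ _ h₂) := by
    have h2s : (2 : ℕ) • WeierstrassCurve.Affine.Point.some _ _ hP
        = WeierstrassCurve.Affine.Point.some _ _ h₂ := by rw [two_smul]; exact h2sum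
    rw [← h2s]; exact hfin.nsmul
  -- general facts about the invariants
  have ha2 : (2 : ℚ) * t ^ 2 ≠ 0 := by positivity
  have ha4 : t ^ 6 - 2 * t ^ 4 + t ^ 2 ≠ 0 := by
    have hf : t ^ 6 - 2 * t ^ 4 + t ^ 2 = t ^ 2 * (t ^ 2 - 1) ^ 2 := by ring
    rw [hf]
    exact mul_ne_zero (pow_ne_zero 2 h0) (pow_ne_zero 2 ht21)
  have va2 : V (2 * t ^ 2) = 1 + 2 * V t := by
    rw [padicValRat.mul two_ne_zero (pow_ne_zero 2 h0), v_two, padicValRat.pow t]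
    push_cast; ring
  have va4 : V (t ^ 6 - 2 * t ^ 4 + t ^ 2) = 2 * V t + 2 * V (t ^ 2 - 1) := by
    rw [show t ^ 6 - 2 * t ^ 4 + t ^ 2 = t ^ 2 * (t ^ 2 - 1) ^ 2 from by ring,
      padicValRat.mul (pow_ne_zero 2 h0) (pow_ne_zero 2 ht21),
      padicValRat.pow t, padicValRat.pow (t ^ 2 - 1)]
    push_cast; ring
  have va6 : V (2 * t ^ 2 * (t ^ 6 - 2 * t ^ 4 + t ^ 2))
      = 1 + 2 * V t + (2 * V t + 2 * V (t ^ 2 - 1)) := by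
    rw [padicValRat.mul ha2 ha4, va2, va4]
  have hv1 : V (1 : ℚ) = 0 := padicValRat.one
  have hvm1 : V (-1 : ℚ) = 0 := by rw [padicValRat.neg, padicValRat.one]
  have ht2v : V (t ^ 2) = 2 * V t := by rw [padicValRat.pow t]; push_cast; ring
  have ht4v : V (t ^ 4) = 4 * V t := by rw [padicValRat.pow t]; push_cast; ring
  have h6t : V (-(6 * t ^ 2)) = 1 + 2 * V t := by
    rw [padicValRat.neg, show (6 : ℚ) * t ^ 2 = 2 * (3 * t ^ 2) from by ring,
      padicValRat.mul two_ne_zero (by positivity),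
      padicValRat.mul three_ne_zero (pow_ne_zero 2 h0), v_two, v_three, padicValRat.pow t]
    push_cast; ring
  rcases v_rat_cases t h0 with hτ | hτ | ⟨⟨a, ha⟩, ⟨b, hb⟩⟩
  · -- V t > 0
    have hδ : V (t ^ 2 - 1) = 0 := by
      have h := vadd (a := (-1 : ℚ)) (s := t ^ 2) (by norm_num)
        (Or.inr (by rw [hvm1, ht2v]; linarith))
      rw [show t ^ 2 - 1 = -1 + t ^ 2 from by ring, h.1, hvm1]
    have hnum := vadd (a := (1 : ℚ)) (s := -(6 * t ^ 2) + t ^ 4) one_ne_zero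
      (by
        refine vge (a := -(6 * t ^ 2)) (b := t ^ 4) (M := V (1 : ℚ)) (Or.inr ?_) (Or.inr ?_)
        · rw [hv1, h6t]; linarith
        · rw [hv1, ht4v]; linarith)
    rw [show (1 : ℚ) + (-(6 * t ^ 2) + t ^ 4) = t ^ 4 - 6 * t ^ 2 + 1 from by ring, hv1] at hnum
    have e0 : V ((t ^ 4 - 6 * t ^ 2 + 1) / 4) = -2 := by
      rw [padicValRat.div hnum.2 (by norm_num : (4 : ℚ) ≠ 0), v_four, hnum.1]
      ring
    exact final t h0 ht1 h₂ (by rw [e0]; norm_num) (by rw [e0, va2]; linarith)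
      (by rw [e0, va4, hδ]; linarith) (by rw [e0, va6, hδ]; linarith) hfin2
  · -- V t < 0
    have hδ : V (t ^ 2 - 1) = 2 * V t := by
      have h := vadd (a := t ^ 2) (s := (-1 : ℚ)) (pow_ne_zero 2 h0)
        (Or.inr (by rw [hvm1, ht2v]; linarith))
      rw [show t ^ 2 - 1 = t ^ 2 + -1 from by ring, h.1, ht2v]
    have hnum := vadd (a := t ^ 4) (s := -(6 * t ^ 2) + 1) (pow_ne_zero 4 h0)
      (by
        refine vge (a := -(6 * t ^ 2)) (b := (1 : ℚ)) (M := V (t ^ 4)) (Or.inr ?_) (Or.inr ?_)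
        · rw [ht4v, h6t]; linarith
        · rw [ht4v, hv1]; linarith)
    rw [show t ^ 4 + (-(6 * t ^ 2) + 1) = t ^ 4 - 6 * t ^ 2 + 1 from by ring, ht4v] at hnum
    have e0 : V ((t ^ 4 - 6 * t ^ 2 + 1) / 4) = 4 * V t - 2 := by
      rw [padicValRat.div hnum.2 (by norm_num : (4 : ℚ) ≠ 0), v_four, hnum.1]
    exact final t h0 ht1 h₂ (by rw [e0]; linarith) (by rw [e0, va2]; linarith)
      (by rw [e0, va4, hδ]; linarith) (by rw [e0, va6, hδ]; linarith) hfin2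
  · -- t = odd/odd : need to double once more
    have hu0 : (t.num : ℚ) ≠ 0 := Int.cast_ne_zero.mpr (Rat.num_ne_zero.mpr h0)
    have hw0 : ((t.den : ℕ) : ℚ) ≠ 0 := Nat.cast_ne_zero.mpr t.den_nz
    have ht : t = (t.num : ℚ) / ((t.den : ℕ) : ℚ) := (Rat.num_div_den t).symm
    have ha' : ((t.num : ℤ) : ℚ) = 2 * (a : ℚ) + 1 := by push_cast [ha]; ring
    have hb' : ((t.den : ℕ) : ℚ) = 2 * (b : ℚ) + 1 := by exact_mod_cast hb
    have hVw : V ((t.den : ℕ) : ℚ) = 0 := by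
      rw [show ((t.den : ℕ) : ℚ) = (((t.den : ℕ) : ℤ) : ℚ) from by push_cast; ring]
      exact v_odd_int ⟨b, hb⟩
    have hτ0 : V t = 0 := by
      rw [ht, padicValRat.div hu0 hw0, v_odd_int ⟨a, ha⟩, hVw]
      ring
    -- x₂ = m / w⁴ with m odd
    set K : ℤ := 2 * (a ^ 2 + a) ^ 2 + 2 * (b ^ 2 + b) ^ 2 - 12 * (a ^ 2 + a) * (b ^ 2 + b)
      - 2 * (a ^ 2 + a) - 2 * (b ^ 2 + b) with hK
    have hmodd : Odd (2 * K - 1) := ⟨K - 1, by ring⟩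
    have hm0 : (2 * K - 1 : ℤ) ≠ 0 := by omega
    have hmQ : ((2 * K - 1 : ℤ) : ℚ) ≠ 0 := Int.cast_ne_zero.mpr hm0
    have hx2eq : (t ^ 4 - 6 * t ^ 2 + 1) / 4 = ((2 * K - 1 : ℤ) : ℚ) / ((t.den : ℕ) : ℚ) ^ 4 := by
      conv_lhs => rw [ht]
      field_simp
      rw [ha', hb', hK]
      push_cast
      ring
    have hVx2 : V ((t ^ 4 - 6 * t ^ 2 + 1) / 4) = 0 := by
      rw [hx2eq, padicValRat.div hmQ (pow_ne_zero 4 hw0), v_odd_int hmodd,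
        padicValRat.pow ((t.den : ℕ) : ℚ), hVw]
      ring
    have hx20 : (t ^ 4 - 6 * t ^ 2 + 1) / 4 ≠ 0 := by
      rw [hx2eq]
      exact div_ne_zero hmQ (pow_ne_zero 4 hw0)
    -- y₂ = -c³ / w⁶ with c odd
    set C : ℤ := 2 * (a ^ 2 + a + b ^ 2 + b) + 1 with hC
    have hcodd : Odd C := ⟨a ^ 2 + a + b ^ 2 + b, by ring⟩
    have hc0 : (C : ℚ) ≠ 0 := Int.cast_ne_zero.mpr (by omega)
    have hy2eq : -(t ^ 2 + 1) ^ 3 / 8 = (-((C : ℚ) ^ 3)) / ((t.den : ℕ) : ℚ) ^ 6 := by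
      conv_lhs => rw [ht]
      field_simp
      rw [ha', hb', hC]
      push_cast
      ring
    have hVy2 : V (-(t ^ 2 + 1) ^ 3 / 8) = 0 := by
      rw [hy2eq, padicValRat.div (by simpa using pow_ne_zero 3 hc0) (pow_ne_zero 6 hw0),
        padicValRat.neg, padicValRat.pow (C : ℚ), v_odd_int hcodd,
        padicValRat.pow ((t.den : ℕ) : ℚ), hVw]
      ring
    have hy20 : -(t ^ 2 + 1) ^ 3 / 8 ≠ 0 := by
      rw [hy2eq]
      exact div_ne_zero (by simpa using pow_ne_zero 3 hc0) (pow_ne_zero 6 hw0)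
    -- 2 ≤ V (t² - 1)
    set D : ℤ := a ^ 2 + a - b ^ 2 - b with hD
    have hdeq : t ^ 2 - 1 = ((4 * D : ℤ) : ℚ) / ((t.den : ℕ) : ℚ) ^ 2 := by
      conv_lhs => rw [ht]
      field_simp
      rw [ha', hb', hD]
      push_cast
      ring
    have hD0 : (D : ℚ) ≠ 0 := by
      intro hc
      apply ht21
      rw [hdeq, show ((4 * D : ℤ) : ℚ) = 4 * (D : ℚ) from by push_cast; ring, hc]
      simp
    have hδ2 : 2 ≤ V (t ^ 2 - 1) := by
      rw [hdeq]
      have h4D : ((4 * D : ℤ) : ℚ) = 4 * (D : ℚ) := by push_cast; ring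
      rw [h4D, padicValRat.div (mul_ne_zero (by norm_num) hD0)
        (pow_ne_zero 2 hw0), padicValRat.mul (by norm_num) hD0, v_four,
        padicValRat.pow ((t.den : ℕ) : ℚ), hVw]
      have := v_int_nonneg D
      push_cast
      linarith
    -- slope numerator at the point 2P
    have h3x20 : (3 : ℚ) * ((t ^ 4 - 6 * t ^ 2 + 1) / 4) ^ 2 ≠ 0 :=
      mul_ne_zero three_ne_zero (pow_ne_zero 2 hx20)
    have hV3x2 : V (3 * ((t ^ 4 - 6 * t ^ 2 + 1) / 4) ^ 2) = 0 := by
      rw [padicValRat.mul three_ne_zero (pow_ne_zero 2 hx20), v_three,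
        padicValRat.pow ((t ^ 4 - 6 * t ^ 2 + 1) / 4), hVx2]
      ring
    have hB : V (3 * ((t ^ 4 - 6 * t ^ 2 + 1) / 4) ^ 2)
        < V (2 * (2 * t ^ 2) * ((t ^ 4 - 6 * t ^ 2 + 1) / 4)) := by
      rw [hV3x2, padicValRat.mul (mul_ne_zero two_ne_zero ha2) hx20,
        padicValRat.mul two_ne_zero ha2, v_two, va2, hτ0, hVx2]
      norm_num
    have hCgt : V (3 * ((t ^ 4 - 6 * t ^ 2 + 1) / 4) ^ 2)
        < V (t ^ 6 - 2 * t ^ 4 + t ^ 2) := by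
      rw [hV3x2, va4, hτ0]
      linarith
    have hnor := vadd (a := 3 * ((t ^ 4 - 6 * t ^ 2 + 1) / 4) ^ 2)
      (s := 2 * (2 * t ^ 2) * ((t ^ 4 - 6 * t ^ 2 + 1) / 4) + (t ^ 6 - 2 * t ^ 4 + t ^ 2))
      h3x20 (vge (a := 2 * (2 * t ^ 2) * ((t ^ 4 - 6 * t ^ 2 + 1) / 4))
        (b := t ^ 6 - 2 * t ^ 4 + t ^ 2) (Or.inr hB) (Or.inr hCgt))
    rw [show 3 * ((t ^ 4 - 6 * t ^ 2 + 1) / 4) ^ 2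
        + (2 * (2 * t ^ 2) * ((t ^ 4 - 6 * t ^ 2 + 1) / 4) + (t ^ 6 - 2 * t ^ 4 + t ^ 2))
        = 3 * ((t ^ 4 - 6 * t ^ 2 + 1) / 4) ^ 2
        + 2 * (2 * t ^ 2) * ((t ^ 4 - 6 * t ^ 2 + 1) / 4) + (t ^ 6 - 2 * t ^ 4 + t ^ 2)
        from by ring, hV3x2] at hnor
    -- second doubling
    obtain ⟨x₄, y₄, h₄, h4sum, h4v, hx40⟩ := double_val t h₂ hy20 hx20 hnor.2
      (by rw [hnor.1, hVy2, va2, hτ0]; norm_num)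
      (by rw [hnor.1, hVy2, hVx2]; norm_num)
    rw [hnor.1, hVy2] at h4v
    have h4v' : V x₄ = -2 := by rw [h4v]; ring
    have hfin4 : IsOfFinAddOrder (WeierstrassCurve.Affine.Point.some _ _ h₄) := by
      have h4s : (2 : ℕ) • WeierstrassCurve.Affine.Point.some _ _ h₂
          = WeierstrassCurve.Affine.Point.some _ _ h₄ := by rw [two_smul]; exact h4sum
      rw [← h4s]; exact hfin2.nsmul
    exact final t h0 ht1 h₄ (by rw [h4v']; norm_num) (by rw [h4v', va2, hτ0]; norm_num)
      (by rw [h4v', va4, hτ0]; linarith) (by rw [h4v', va6, hτ0]; linarith) hfin4
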